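/- Let F be a field and N, N_E natural numbers with N_E ≤ N. Let A be an (N−N_E)×N matrix over F with rank N−N_E such that every nonzero vector in the row span of A has Hamming weight at least N_E+1 (i.e., A is a generator matrix of a maximum distance separable [N, N−N_E, N_E+1] code). Let ι : Fin N_E → Fin N be injective and let A_E be the N_E×N matrix whose i-th row is the standard basis vector e_{ι(i)}. Then the square N×N stacked matrix B = [A; A_E] has rank N, i.e., B is invertible. -/

import Mathlib

/-- Let `F` be a field and `N_E ≤ N`. Let `A` be an `(N - N_E) × N` matrix over `F`
with `rank A = N - N_E` such that every nonzero vector in the row span of `A` has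
Hamming weight at least `N_E + 1` (an MDS generator matrix). Let `ι : Fin N_E → Fin N`
be injective, and let `A_E` be the `N_E × N` matrix whose `i`-th row is the standard
basis vector `e_{ι i}`. Then the stacked `N × N` matrix `B = [A; A_E]` has rank `N`. -/
theorem stmt_2 (F : Type*) [Field F] [DecidableEq F] (N NE : ℕ) (hNE : NE ≤ N)
    (A : Matrix (Fin (N - NE)) (Fin N) F) (hA : A.rank = N - NE)
    (hMDS : ∀ v ∈ Submodule.span F (Set.range A), v ≠ 0 → NE + 1 ≤ hammingNorm v)
    (ι : Fin NE → Fin N) (hι : Function.Injective ι)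
    (AE : Matrix (Fin NE) (Fin N) F)
    (hAE : ∀ i, AE i = Pi.single (ι i) 1) :
    (Matrix.fromRows A AE).rank = N := by
  have hAind : LinearIndependent F A.row := by
    rw [linearIndependent_iff_card_eq_finrank_span, Set.finrank,
      ← Matrix.rank_eq_finrank_span_row, hA, Fintype.card_fin]
  have hind : LinearIndependent F (Matrix.fromRows A AE).row := by
    rw [Fintype.linearIndependent_iff]
    intro g hg
    rw [Fintype.sum_sum_type] at hg
    set v : Fin N → F := ∑ i, g (Sum.inl i) • A i with hv
    have hsum : v + ∑ j, g (Sum.inr j) • (Pi.single (ι j) 1 : Fin N → F) = 0 := by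
      rw [hv, ← hg]
      congr 1
      exact Finset.sum_congr rfl fun j _ => by
        rw [show (Matrix.fromRows A AE).row (Sum.inr j) = AE j from rfl, hAE]
    -- v has small hamming weight
    have hvmem : v ∈ Submodule.span F (Set.range A) :=
      Submodule.sum_mem _ fun i _ => Submodule.smul_mem _ _
        (Submodule.subset_span (Set.mem_range_self i))
    have hv0 : v = 0 := by
      by_contra hne
      have h1 := hMDS v hvmem hne
      have h2 : hammingNorm v ≤ NE := by
        have hveq : v = -∑ j, g (Sum.inr j) • (Pi.single (ι j) 1 : Fin N → F) := by
          rw [eq_neg_iff_add_eq_zero]; exact hsum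
        have hsupp : ({i | v i ≠ 0} : Finset (Fin N)) ⊆ Finset.univ.image ι := by
          intro k hk
          simp only [Finset.mem_filter, Finset.mem_univ, true_and] at hk
          by_contra hkn
          apply hk
          rw [hveq]
          simp only [Pi.neg_apply, Finset.sum_apply, Pi.smul_apply, neg_eq_zero]
          refine Finset.sum_eq_zero fun j _ => ?_
          have : ι j ≠ k := fun h => hkn (by rw [← h]; exact Finset.mem_image_of_mem ι (Finset.mem_univ j))
          simp [Pi.single_apply, Ne.symm this]
        calc hammingNorm v ≤ (Finset.univ.image ι).card := Finset.card_le_card hsupp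
          _ ≤ Finset.univ.card := Finset.card_image_le.trans (le_of_eq rfl)
          _ = NE := Finset.card_fin NE
      omega
    -- g ∘ inr = 0
    have hginr : ∀ j, g (Sum.inr j) = 0 := by
      intro j
      have := congrFun hsum (ι j)
      rw [hv0] at this
      simp only [Pi.add_apply, Pi.zero_apply, Finset.sum_apply, Pi.smul_apply, zero_add] at this
      rw [Finset.sum_eq_single j] at this
      · simpa using this
      · intro b _ hb
        simp [Pi.single_apply, (hι.ne hb).symm]
      · intro h; exact absurd (Finset.mem_univ j) h
    have hv0' : ∑ i, g (Sum.inl i) • A i = 0 := by rw [← hv]; exact hv0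
    have hginl : ∀ i, g (Sum.inl i) = 0 :=
      Fintype.linearIndependent_iff.mp hAind (fun i => g (Sum.inl i)) hv0'
    intro i
    cases i with
    | inl i => exact hginl i
    | inr j => exact hginr j
  rw [hind.rank_matrix, Fintype.card_sum, Fintype.card_fin, Fintype.card_fin]
  omega
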